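/- There exists a real constant C > 0 such that for every natural number m ≥ 1, every real c ≥ 0, and all non-decreasing real sequences a₁ ≤ … ≤ a_m and b₁ ≤ … ≤ b_m with 1 ≤ a_i ≤ m, 1 ≤ b_i ≤ m, and a_i ≤ b_i + c for every i, one has ∑_{i=1}^{m−1} |a_i/b_i − a_{i+1}/b_{i+1}| ≤ 2·ln m + C·(c + 1)². -/

import Mathlib

lemma ratio_step (c x y x' y' : ℝ) (hc : 0 ≤ c)
    (hx : 1 ≤ x) (hy : 1 ≤ y) (hxx' : x ≤ x') (hyy' : y ≤ y')
    (hxc : x ≤ y + c) (hx'c : x' ≤ y' + c) :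
    |x / y - x' / y'| ≤
      ((Real.log x' - Real.log x) + c * (c + 1) * (x⁻¹ - x'⁻¹)) +
      ((Real.log y' - Real.log y) + c * (y⁻¹ - y'⁻¹)) := by
  have hx0 : (0:ℝ) < x := by linarith
  have hy0 : (0:ℝ) < y := by linarith
  have hx'0 : (0:ℝ) < x' := by linarith
  have hy'0 : (0:ℝ) < y' := by linarith
  have hy'1 : (1:ℝ) ≤ y' := le_trans hy hyy'
  have hLa : 1 - x / x' ≤ Real.log x' - Real.log x := by
    have h := Real.log_le_sub_one_of_pos (div_pos hx0 hx'0)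
    rw [Real.log_div (ne_of_gt hx0) (ne_of_gt hx'0)] at h
    linarith
  have hLb : 1 - y / y' ≤ Real.log y' - Real.log y := by
    have h := Real.log_le_sub_one_of_pos (div_pos hy0 hy'0)
    rw [Real.log_div (ne_of_gt hy0) (ne_of_gt hy'0)] at h
    linarith
  have hinvx : x'⁻¹ ≤ x⁻¹ := inv_anti₀ hx0 hxx'
  have hinvy : y'⁻¹ ≤ y⁻¹ := inv_anti₀ hy0 hyy'
  have hlogx : Real.log x ≤ Real.log x' := Real.log_le_log hx0 hxx'
  have hlogy : Real.log y ≤ Real.log y' := Real.log_le_log hy0 hyy'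
  have hTa0 : 0 ≤ (Real.log x' - Real.log x) + c * (c + 1) * (x⁻¹ - x'⁻¹) := by
    have : 0 ≤ c * (c + 1) * (x⁻¹ - x'⁻¹) :=
      mul_nonneg (by positivity) (by linarith)
    linarith
  have hTb0 : 0 ≤ (Real.log y' - Real.log y) + c * (y⁻¹ - y'⁻¹) := by
    have : 0 ≤ c * (y⁻¹ - y'⁻¹) := mul_nonneg hc (by linarith)
    linarith
  have up : x / y - x' / y' ≤ (Real.log y' - Real.log y) + c * (y⁻¹ - y'⁻¹) := by
    have e1 : x / y' ≤ x' / y' := by gcongr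
    have e2 : x / y - x / y' = (x * (y' - y)) / (y * y') := by field_simp
    have e3 : (x * (y' - y)) / (y * y') ≤ ((y + c) * (y' - y)) / (y * y') := by
      rw [div_le_div_iff_of_pos_right (by positivity)]
      nlinarith
    have e4 : ((y + c) * (y' - y)) / (y * y') = (1 - y / y') + c * (y⁻¹ - y'⁻¹) := by
      field_simp
    linarith
  have lo : x' / y' - x / y ≤ (Real.log x' - Real.log x) + c * (c + 1) * (x⁻¹ - x'⁻¹) := by
    have e1 : x / y' ≤ x / y := by gcongr
    have e2 : x' / y' - x / y' = (x' - x) / y' := by ring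
    have hA : 0 ≤ x' - x := by linarith
    have hB : 0 ≤ c - (x' - y') := by linarith
    have hC : 0 ≤ (c + 1) * y' - x := by nlinarith
    have f1 : (x' - x) / y' - (x' - x) / x' ≤ (c * (c + 1) * (x' - x)) / (x * x') := by
      rw [div_sub_div _ _ (ne_of_gt hy'0) (ne_of_gt hx'0),
        div_le_div_iff₀ (by positivity) (by positivity)]
      nlinarith [mul_nonneg hB (mul_nonneg hA (mul_nonneg hx0.le hx'0.le)),
        mul_nonneg (mul_nonneg (mul_nonneg hc hA) hx'0.le) hC]
    have f2 : (x' - x) / x' = 1 - x / x' := by field_simp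
    have f3 : (c * (c + 1) * (x' - x)) / (x * x') = c * (c + 1) * (x⁻¹ - x'⁻¹) := by
      field_simp
    linarith
  rw [abs_le]
  constructor <;> linarith

lemma tele_Ico (f : ℕ → ℝ) (m : ℕ) (hm : 1 ≤ m) :
    ∑ i ∈ Finset.Ico 1 m, (f (i + 1) - f i) = f m - f 1 := by
  induction m with
  | zero => omega
  | succ n ih =>
    rcases Nat.eq_or_lt_of_le hm with h | h
    · simp [← h]
    · have hn : 1 ≤ n := by omega
      rw [Finset.sum_Ico_succ_top hn, ih hn]
      ring
/-- There is a constant `C > 0` such that for all `m ≥ 1`, `c ≥ 0` and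
non-decreasing sequences `a i`, `b i` (indexed `1,…,m`) with `1 ≤ a i ≤ m`,
`1 ≤ b i ≤ m` and `a i ≤ b i + c`, the total variation of the ratios is at most
`2 ln m + C (c+1)²`. -/
theorem stmt_1 :
    ∃ C : ℝ, 0 < C ∧
      ∀ (m : ℕ), 1 ≤ m → ∀ (c : ℝ), 0 ≤ c → ∀ (a b : ℕ → ℝ),
        (∀ i, 1 ≤ i → i < m → a i ≤ a (i + 1)) →
        (∀ i, 1 ≤ i → i < m → b i ≤ b (i + 1)) →
        (∀ i, 1 ≤ i → i ≤ m → 1 ≤ a i) →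
        (∀ i, 1 ≤ i → i ≤ m → a i ≤ m) →
        (∀ i, 1 ≤ i → i ≤ m → 1 ≤ b i) →
        (∀ i, 1 ≤ i → i ≤ m → b i ≤ m) →
        (∀ i, 1 ≤ i → i ≤ m → a i ≤ b i + c) →
        ∑ i ∈ Finset.Ico 1 m, |a i / b i - a (i + 1) / b (i + 1)| ≤
          2 * Real.log m + C * (c + 1) ^ 2 := by
  refine ⟨1, one_pos, ?_⟩
  intro m hm c hc a b ha_mono hb_mono ha1 ham hb1 hbm habc
  set g : ℕ → ℝ := fun i =>
    (Real.log (a i) + c * (c + 1) * (-(a i)⁻¹)) +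
    (Real.log (b i) + c * (-(b i)⁻¹)) with hg
  clear_value g
  have key : ∀ i ∈ Finset.Ico 1 m,
      |a i / b i - a (i + 1) / b (i + 1)| ≤ g (i + 1) - g i := by
    intro i hi
    rw [Finset.mem_Ico] at hi
    obtain ⟨hi1, hilt⟩ := hi
    have him : i ≤ m := le_of_lt hilt
    have hi1m : i + 1 ≤ m := hilt
    have h := ratio_step c (a i) (b i) (a (i + 1)) (b (i + 1)) hc
      (ha1 i hi1 him) (hb1 i hi1 him) (ha_mono i hi1 hilt) (hb_mono i hi1 hilt)
      (habc i hi1 him) (habc (i + 1) (by omega) hi1m)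
    calc |a i / b i - a (i + 1) / b (i + 1)| ≤
        ((Real.log (a (i+1)) - Real.log (a i)) + c * (c + 1) * ((a i)⁻¹ - (a (i+1))⁻¹)) +
        ((Real.log (b (i+1)) - Real.log (b i)) + c * ((b i)⁻¹ - (b (i+1))⁻¹)) := h
      _ = g (i + 1) - g i := by rw [hg]; ring
  have hsum := Finset.sum_le_sum key
  rw [tele_Ico g m hm] at hsum
  have hm1 : (1:ℝ) ≤ (m:ℝ) := by exact_mod_cast hm
  -- bounds on g m and g 1
  have ha1m : 1 ≤ a m := ha1 m hm le_rfl
  have hb1m : 1 ≤ b m := hb1 m hm le_rfl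
  have ha11 : 1 ≤ a 1 := ha1 1 le_rfl hm
  have hb11 : 1 ≤ b 1 := hb1 1 le_rfl hm
  have hamm : a m ≤ m := ham m hm le_rfl
  have hbmm : b m ≤ m := hbm m hm le_rfl
  have hlam : Real.log (a m) ≤ Real.log m := Real.log_le_log (by linarith) hamm
  have hlbm : Real.log (b m) ≤ Real.log m := Real.log_le_log (by linarith) hbmm
  have hla1 : 0 ≤ Real.log (a 1) := Real.log_nonneg ha11
  have hlb1 : 0 ≤ Real.log (b 1) := Real.log_nonneg hb11
  have hiam : 0 ≤ (a m)⁻¹ := by positivity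
  have hibm : 0 ≤ (b m)⁻¹ := by positivity
  have hia1 : (a 1)⁻¹ ≤ 1 := by
    rw [inv_le_one_iff₀]; right; exact ha11
  have hib1 : (b 1)⁻¹ ≤ 1 := by
    rw [inv_le_one_iff₀]; right; exact hb11
  have h1 : c * (c + 1) * (a 1)⁻¹ ≤ c * (c + 1) :=
    le_trans (mul_le_mul_of_nonneg_left hia1 (by positivity)) (by linarith [mul_le_mul_of_nonneg_left hia1 (show (0:ℝ) ≤ c * (c+1) by positivity)])
  have h2 : c * (b 1)⁻¹ ≤ c := le_trans (mul_le_mul_of_nonneg_left hib1 hc) (by linarith)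
  have hgm : g m - g 1 ≤ 2 * Real.log m + 1 * (c + 1) ^ 2 := by
    rw [hg]
    simp only []
    have hnn1 : 0 ≤ c * (c + 1) * (a m)⁻¹ := by positivity
    have hnn2 : 0 ≤ c * (b m)⁻¹ := by positivity
    nlinarith [h1, h2]
  linarith
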